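/- For all u, v, w ∈ W, the following are equivalent: (i) for every q ∈ W with q ≤ w, one has q⁻¹ v ≤ u; (ii) w⁻¹ * v ≤ u. -/

import Mathlib

open scoped Classical

/-- Data of a root system with a fixed choice of simple roots: an ambient
`ℚ`-vector space `V`, a set of roots `Φ` with a distinguished subset `pos` of
positive roots, a coroot functional `coroot β = ⟨·, β^∨⟩` for each root, and
simple roots `α 1, …, α r`. -/
structure RootData where
  r : ℕ
  V : Type
  [grp : AddCommGroup V]
  [mod : Module ℚ V]
  Φ : Set V
  pos : Set V
  coroot : V → Module.Dual ℚ V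
  α : Fin r → V

attribute [instance] RootData.grp RootData.mod

namespace RootData

variable (R : RootData)

/-- The group of linear automorphisms of `V`, in which the Weyl group lives. -/
abbrev Aut : Type := R.V ≃ₗ[ℚ] R.V

/-- The linear map `v ↦ v - ⟨v, β^∨⟩ β`. -/
noncomputable def reflMap (β : R.V) : R.V →ₗ[ℚ] R.V :=
  LinearMap.id - (R.coroot β).smulRight β

/-- The reflection `s_β` associated to a root `β`, as a linear automorphism. -/
noncomputable def s (β : R.V) : R.Aut :=
  if h : (R.reflMap β).comp (R.reflMap β) = LinearMap.id then
    LinearEquiv.ofLinear (R.reflMap β) (R.reflMap β) h h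
  else LinearEquiv.refl ℚ R.V

/-- The simple reflections `s_i := s_{α_i}`. -/
noncomputable def S (i : Fin R.r) : R.Aut := R.s (R.α i)

/-- The Weyl group `W`, generated by the simple reflections. -/
noncomputable def weylGroup : Subgroup R.Aut := Subgroup.closure (Set.range R.S)

/-- The product `s_{i_1} ⋯ s_{i_k}` of a word in the simple reflections. -/
noncomputable def wordProd (l : List (Fin R.r)) : R.Aut := (l.map R.S).prod

/-- The length function on `W`: least length of a word in the simple
reflections expressing the given element. -/
noncomputable def len (w : R.Aut) : ℕ :=
  sInf {n | ∃ l : List (Fin R.r), l.length = n ∧ R.wordProd l = w}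

/-- A word is reduced if its length equals the length of its product. -/
def Reduced (l : List (Fin R.r)) : Prop := R.len (R.wordProd l) = l.length

/-- The Bruhat order on `W`: `u ≤ w` iff some reduced word for `w` has a
subword whose product is `u`. -/
def BruhatLE (u w : R.Aut) : Prop :=
  ∃ l : List (Fin R.r), R.Reduced l ∧ R.wordProd l = w ∧
    ∃ l' : List (Fin R.r), l'.Sublist l ∧ R.wordProd l' = u

/-- Strict Bruhat order. -/
def BruhatLT (u w : R.Aut) : Prop := R.BruhatLE u w ∧ u ≠ w

/-- One step of the Demazure product: `s_i * w := max {w, s_i w}`. -/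
noncomputable def dmulStep (i : Fin R.r) (x : R.Aut) : R.Aut :=
  if R.len x < R.len (R.S i * x) then R.S i * x else x

/-- Demazure product of a word in the simple reflections against `w`:
`s_{i_1} * (s_{i_2} * (⋯ * (s_{i_k} * w)))`. -/
noncomputable def dmulList (l : List (Fin R.r)) (w : R.Aut) : R.Aut :=
  l.foldr R.dmulStep w

/-- The Demazure product `v * w` on the Weyl group, computed by choosing a
reduced word for `v` (it is independent of this choice). -/
noncomputable def dmul (v w : R.Aut) : R.Aut :=
  if h : ∃ l : List (Fin R.r), R.Reduced l ∧ R.wordProd l = v then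
    R.dmulList h.choose w
  else v * w

/-- The parabolic subgroup `W_{P_i}` generated by the simple reflections
`s_j`, `j ≠ i`. -/
noncomputable def WPar (i : Fin R.r) : Subgroup R.Aut :=
  Subgroup.closure (R.S '' {j | j ≠ i})

/-- `W^{P_i}`: the set of minimal-length representatives of cosets of
`W/W_{P_i}`. -/
def minReps (i : Fin R.r) : Set R.Aut :=
  {v | v ∈ R.weylGroup ∧ ∀ p ∈ R.WPar i, R.len v ≤ R.len (v * p)}

/-- `u` is the minimal-length representative of the coset `w W_{P_i}`. -/
def IsMinRep (i : Fin R.r) (u w : R.Aut) : Prop :=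
  u ∈ R.minReps i ∧ u⁻¹ * w ∈ R.WPar i

/-- A weight is dominant if it pairs nonnegatively with every simple coroot. -/
def Dominant (lam : R.V) : Prop := ∀ i : Fin R.r, 0 ≤ R.coroot (R.α i) lam

/-- The dual action of the Weyl group on `V* `: `(u f)(v) = f(u⁻¹ v)`. -/
noncomputable def dualAct (u : R.Aut) (f : Module.Dual ℚ R.V) : Module.Dual ℚ R.V :=
  f.comp (u.symm : R.V →ₗ[ℚ] R.V)

/-- The Demazure polytope `P_λ^w := conv {uλ : u ∈ W, u ≤ w}`. -/
noncomputable def demPolytope (lam : R.V) (w : R.Aut) : Set R.V :=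
  convexHull ℚ {m | ∃ u : R.Aut, u ∈ R.weylGroup ∧ R.BruhatLE u w ∧ m = u lam}

/-- Membership in the weight lattice `X`. -/
def IsWeight (lam : R.V) : Prop := ∀ β ∈ R.Φ, ∃ m : ℤ, R.coroot β lam = (m : ℚ)

/-- The root lattice `Q = ℤΦ`. -/
noncomputable def rootLattice : AddSubgroup R.V := AddSubgroup.closure R.Φ

/-- `w₀` is the longest element of the Weyl group. -/
def IsLongest (w₀ : R.Aut) : Prop :=
  w₀ ∈ R.weylGroup ∧ ∀ g ∈ R.weylGroup, R.len g ≤ R.len w₀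

/-- The positive roots `Φ_{P_i}⁺ = Φ⁺ ∩ span {α_j : j ≠ i}` of the standard
Levi subsystem. -/
def parPos (i : Fin R.r) : Set R.V :=
  {η | η ∈ R.pos ∧ η ∈ Submodule.span ℚ (R.α '' {j | j ≠ i})}

/-- The value `D_i (e^λ)` of the Demazure operator on a basis element of the
group ring `ℤ[X]`. -/
noncomputable def demOnBasis (i : Fin R.r) (lam : R.V) : R.V →₀ ℤ :=
  if 0 ≤ ⌊R.coroot (R.α i) lam⌋ then
    ∑ k ∈ Finset.range (⌊R.coroot (R.α i) lam⌋.toNat + 1),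
      Finsupp.single (lam - (k : ℚ) • R.α i) 1
  else if ⌊R.coroot (R.α i) lam⌋ = -1 then 0
  else - ∑ k ∈ Finset.range ((-⌊R.coroot (R.α i) lam⌋).toNat - 1),
      Finsupp.single (lam + ((k : ℚ) + 1) • R.α i) 1

/-- The Demazure operator `D_i`, as a `ℤ`-linear endomorphism of the group
ring `ℤ[X]` (realized as finitely supported functions `V →₀ ℤ`). -/
noncomputable def demOp (i : Fin R.r) : (R.V →₀ ℤ) →ₗ[ℤ] (R.V →₀ ℤ) :=
  Finsupp.lsum ℤ fun lam => LinearMap.toSpanSingleton ℤ (R.V →₀ ℤ) (R.demOnBasis i lam)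

/-- The Demazure character `D_{i_1} ⋯ D_{i_k} (e^λ)`. -/
noncomputable def demChar (l : List (Fin R.r)) (lam : R.V) : R.V →₀ ℤ :=
  l.foldr (fun i p => R.demOp i p) (Finsupp.single lam 1)

/-- The axioms of a finite crystallographic root system spanning `V`, with
simple roots `α_i` and positive roots `pos`. -/
structure IsRootSystem (R : RootData) : Prop where
  finite : R.Φ.Finite
  span_top : Submodule.span ℚ R.Φ = ⊤
  ne_zero : ∀ β ∈ R.Φ, β ≠ 0
  coroot_self : ∀ β ∈ R.Φ, R.coroot β β = 2
  crystallographic : ∀ β ∈ R.Φ, ∀ γ ∈ R.Φ, ∃ m : ℤ, R.coroot β γ = (m : ℚ)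
  reflection_stable : ∀ β ∈ R.Φ, ∀ γ ∈ R.Φ, γ - R.coroot β γ • β ∈ R.Φ
  simple_mem : ∀ i, R.α i ∈ R.Φ
  indep : LinearIndependent ℚ R.α
  pos_subset : R.pos ⊆ R.Φ
  pos_or_neg : ∀ β ∈ R.Φ, (β ∈ R.pos ∧ -β ∉ R.pos) ∨ (β ∉ R.pos ∧ -β ∈ R.pos)
  simple_pos : ∀ i, R.α i ∈ R.pos
  pos_nonneg_comb : ∀ β ∈ R.pos, ∃ c : Fin R.r → ℚ, (∀ i, 0 ≤ c i) ∧ β = ∑ i, c i • R.α i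

end RootData

namespace RootData

variable {R : RootData} (hR : R.IsRootSystem)

/-! ### Basic facts about simple reflections and words -/

lemma reflMap_apply (β : R.V) (x : R.V) :
    R.reflMap β x = x - R.coroot β x • β := rfl

include hR

lemma reflMap_sq (i : Fin R.r) :
    (R.reflMap (R.α i)).comp (R.reflMap (R.α i)) = LinearMap.id := by
  have h2 : R.coroot (R.α i) (R.α i) = 2 := hR.coroot_self _ (hR.simple_mem i)
  ext x
  simp only [LinearMap.comp_apply, reflMap_apply, LinearMap.id_apply, map_sub, map_smul, h2]
  module

lemma S_apply (i : Fin R.r) (x : R.V) :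
    R.S i x = x - R.coroot (R.α i) x • R.α i := by
  rw [S, s, dif_pos (reflMap_sq hR i)]
  rfl

lemma S_mul_self (i : Fin R.r) : R.S i * R.S i = 1 := by
  apply LinearEquiv.toLinearMap_injective
  apply LinearMap.ext
  intro x
  show R.S i (R.S i x) = x
  rw [S_apply hR, S_apply hR]
  have h2 : R.coroot (R.α i) (R.α i) = 2 := hR.coroot_self _ (hR.simple_mem i)
  simp only [map_sub, map_smul, smul_eq_mul, h2]
  module

lemma S_inv (i : Fin R.r) : (R.S i)⁻¹ = R.S i := by
  rw [inv_eq_iff_mul_eq_one, S_mul_self hR]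

omit hR

@[simp] lemma wordProd_nil : R.wordProd [] = 1 := rfl

lemma wordProd_cons (i : Fin R.r) (l : List (Fin R.r)) :
    R.wordProd (i :: l) = R.S i * R.wordProd l := by
  simp [wordProd]

lemma wordProd_append (l₁ l₂ : List (Fin R.r)) :
    R.wordProd (l₁ ++ l₂) = R.wordProd l₁ * R.wordProd l₂ := by
  simp [wordProd]

include hR

lemma wordProd_reverse (l : List (Fin R.r)) :
    R.wordProd l.reverse = (R.wordProd l)⁻¹ := by
  induction l with
  | nil => simp
  | cons i l ih =>
      rw [List.reverse_cons, wordProd_append, ih,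
        show R.wordProd (i::l) = R.S i * R.wordProd l from wordProd_cons i l,
        mul_inv_rev, S_inv hR]
      simp [wordProd]

/-- Elements of the Weyl group are word products. -/
lemma exists_word {x : R.Aut} (hx : x ∈ R.weylGroup) : ∃ l, R.wordProd l = x := by
  induction hx using Subgroup.closure_induction with
  | mem y hy =>
      obtain ⟨i, rfl⟩ := hy
      exact ⟨[i], by simp [wordProd]⟩
  | one => exact ⟨[], rfl⟩
  | mul y z _ _ hy hz =>
      obtain ⟨l₁, rfl⟩ := hy; obtain ⟨l₂, rfl⟩ := hz
      exact ⟨l₁ ++ l₂, wordProd_append l₁ l₂⟩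
  | inv y _ hy =>
      obtain ⟨l, rfl⟩ := hy
      exact ⟨l.reverse, wordProd_reverse hR l⟩

lemma wordProd_mem_Phi (l : List (Fin R.r)) {β : R.V} (hβ : β ∈ R.Φ) :
    R.wordProd l β ∈ R.Φ := by
  induction l with
  | nil => simpa
  | cons i l ih =>
      rw [wordProd_cons]
      show R.S i (R.wordProd l β) ∈ R.Φ
      rw [S_apply hR]
      exact hR.reflection_stable _ (hR.simple_mem i) _ ih

lemma neg_notMem_pos {β : R.V} (hβ : β ∈ R.pos) : -β ∉ R.pos := by
  rcases hR.pos_or_neg β (hR.pos_subset hβ) with h | h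
  · exact h.2
  · exact absurd hβ h.1

lemma neg_mem_pos {β : R.V} (hβ : β ∈ R.Φ) (h : β ∉ R.pos) : -β ∈ R.pos := by
  rcases hR.pos_or_neg β hβ with h' | h'
  · exact absurd h'.1 h
  · exact h'.2

end RootData
namespace RootData

variable {R : RootData} (hR : R.IsRootSystem)

/-! ### Length basics -/

lemma len_le (l : List (Fin R.r)) : R.len (R.wordProd l) ≤ l.length :=
  Nat.sInf_le ⟨l, rfl, rfl⟩

lemma exists_reduced_word (l : List (Fin R.r)) :
    ∃ m : List (Fin R.r), R.Reduced m ∧ R.wordProd m = R.wordProd l ∧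
      m.length = R.len (R.wordProd l) := by
  have hne : {n | ∃ m : List (Fin R.r), m.length = n ∧ R.wordProd m = R.wordProd l}.Nonempty :=
    ⟨l.length, l, rfl, rfl⟩
  obtain ⟨m, hm1, hm2⟩ := Nat.sInf_mem hne
  refine ⟨m, by rw [Reduced, hm2, hm1]; rfl, hm2, by rw [len]; exact hm1⟩

@[simp] lemma len_one : R.len (1 : R.Aut) = 0 :=
  Nat.le_zero.mp (len_le ([] : List (Fin R.r)))

include hR

lemma len_inv (l : List (Fin R.r)) : R.len (R.wordProd l)⁻¹ = R.len (R.wordProd l) := by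
  have key : ∀ m : List (Fin R.r), R.len (R.wordProd m)⁻¹ ≤ R.len (R.wordProd m) := by
    intro m
    obtain ⟨m', _, hm'2, hm'3⟩ := exists_reduced_word (R := R) m
    calc R.len (R.wordProd m)⁻¹ = R.len (R.wordProd m'.reverse) := by
            rw [wordProd_reverse hR, hm'2]
      _ ≤ m'.reverse.length := len_le _
      _ = m'.length := by simp
      _ = _ := hm'3
  refine le_antisymm (key l) ?_
  have := key l.reverse
  rwa [wordProd_reverse hR, inv_inv] at this

omit hR in
lemma len_mul_S_le (l : List (Fin R.r)) (i : Fin R.r) :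
    R.len (R.wordProd l * R.S i) ≤ R.len (R.wordProd l) + 1 := by
  obtain ⟨m, _, hm2, hm3⟩ := exists_reduced_word (R := R) l
  calc R.len (R.wordProd l * R.S i) = R.len (R.wordProd (m ++ [i])) := by
        rw [wordProd_append, hm2]; simp [wordProd]
    _ ≤ m.length + 1 := by simpa using len_le (m ++ [i])
    _ = _ := by rw [hm3]

lemma len_le_len_mul_S (l : List (Fin R.r)) (i : Fin R.r) :
    R.len (R.wordProd l) ≤ R.len (R.wordProd l * R.S i) + 1 := by
  have := len_mul_S_le (R := R) (l ++ [i]) i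
  rw [wordProd_append] at this
  simp only [wordProd, List.map_cons, List.map_nil, List.prod_cons, List.prod_nil,
    mul_one] at this
  rw [mul_assoc, S_mul_self hR, mul_one] at this
  simpa [wordProd] using this

end RootData
namespace RootData

variable {R : RootData} (hR : R.IsRootSystem)

/-! ### Geometric core -/

include hR

lemma S_apply_self (i : Fin R.r) : R.S i (R.α i) = -R.α i := by
  rw [S_apply hR, hR.coroot_self _ (hR.simple_mem i)]
  module

/-- If a positive root is sent to a non-positive root by a simple reflection,
it is a positive multiple of the corresponding simple root. -/
lemma eq_smul_simple {β : R.V} (i : Fin R.r) (hβ : β ∈ R.pos) (hni : R.S i β ∉ R.pos) :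
    ∃ c : ℚ, 0 < c ∧ β = c • R.α i := by
  obtain ⟨c, hc0, hcsum⟩ := hR.pos_nonneg_comb β hβ
  have hβΦ : β ∈ R.Φ := hR.pos_subset hβ
  have hSΦ : R.S i β ∈ R.Φ := by
    rw [S_apply hR]; exact hR.reflection_stable _ (hR.simple_mem i) _ hβΦ
  have hneg : -(R.S i β) ∈ R.pos := neg_mem_pos hR hSΦ hni
  obtain ⟨d, hd0, hdsum⟩ := hR.pos_nonneg_comb _ hneg
  set t : ℚ := R.coroot (R.α i) β with ht
  have hsum : ∑ m, (c m + d m + (if m = i then -t else 0)) • R.α m = 0 := by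
    have h1 : R.S i β = β - t • R.α i := S_apply hR i β
    have h2 : ∑ m, (if m = i then -t else 0 : ℚ) • R.α m = -(t • R.α i) := by
      rw [Finset.sum_eq_single i]
      · simp
      · intro b _ hb; simp [hb]
      · simp
    simp only [add_smul, Finset.sum_add_distrib, h2, ← hcsum, ← hdsum]
    rw [h1]
    module
  have hzero : ∀ m, c m + d m + (if m = i then -t else 0) = 0 :=
    Fintype.linearIndependent_iff.mp hR.indep _ hsum
  have hcm : ∀ m, m ≠ i → c m = 0 := by
    intro m hm
    have := hzero m
    rw [if_neg hm, add_zero] at this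
    nlinarith [hc0 m, hd0 m]
  have hβeq : β = c i • R.α i := by
    rw [hcsum, Finset.sum_eq_single i]
    · intro b _ hb; rw [hcm b hb, zero_smul]
    · simp
  refine ⟨c i, ?_, hβeq⟩
  rcases lt_or_eq_of_le (hc0 i) with h | h
  · exact h
  · exfalso
    exact hR.ne_zero β hβΦ (by rw [hβeq, ← h, zero_smul])

/-- Uniqueness of reflections preserving the (finite, spanning) root set. -/
lemma refl_unique {β : R.V} (hβ0 : β ≠ 0) (f g : Module.Dual ℚ R.V)
    (hf : f β = 2) (hg : g β = 2)
    (hfΦ : ∀ γ ∈ R.Φ, γ - f γ • β ∈ R.Φ) (hgΦ : ∀ γ ∈ R.Φ, γ - g γ • β ∈ R.Φ) :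
    f = g := by
  have key : ∀ γ ∈ R.Φ, f γ = g γ := by
    intro γ hγ
    by_contra hne
    have hiter : ∀ n : ℕ, γ + (n : ℚ) • ((g γ - f γ) • β) ∈ R.Φ := by
      intro n
      induction n with
      | zero => simpa using hγ
      | succ n ih =>
          have step := hfΦ _ (hgΦ _ ih)
          have harith : (γ + (n : ℚ) • (g γ - f γ) • β) - g (γ + (n : ℚ) • (g γ - f γ) • β) • β
              - f ((γ + (n : ℚ) • (g γ - f γ) • β) - g (γ + (n : ℚ) • (g γ - f γ) • β) • β) • β
              = γ + ((n : ℚ) + 1) • (g γ - f γ) • β := by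
            simp only [map_add, map_smul, map_sub, hf, hg, smul_eq_mul]
            module
          rw [harith] at step
          simpa [add_smul] using step
    have hinj : Function.Injective (fun n : ℕ => γ + (n : ℚ) • ((g γ - f γ) • β)) := by
      intro a b hab
      simp only [add_right_injective] at hab
      have h1 : ((a : ℚ) - b) • ((g γ - f γ) • β) = 0 := by
        rw [sub_smul, sub_eq_zero]
        exact add_left_cancel hab
      have h2 : (g γ - f γ) • β ≠ 0 :=
        smul_ne_zero (sub_ne_zero.mpr (fun h => hne h.symm)) hβ0
      have h3 : (a : ℚ) - b = 0 := by
        by_contra h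
        exact h2 (by rwa [smul_eq_zero_iff_right h] at h1)
      exact_mod_cast sub_eq_zero.mp h3
    exact (Set.infinite_of_injective_forall_mem hinj (fun n => hiter n)) hR.finite
  exact LinearMap.ext_on hR.span_top key

end RootData
namespace RootData

variable {R : RootData} (hR : R.IsRootSystem)

/-- Reflections: conjugates of simple reflections by Weyl group elements. -/
def IsRefl (R : RootData) (t : R.Aut) : Prop :=
  ∃ (l : List (Fin R.r)) (i : Fin R.r),
    t = R.wordProd l * R.S i * (R.wordProd l)⁻¹

include hR

lemma IsRefl.isWord {t : R.Aut} (ht : R.IsRefl t) :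
    ∃ m : List (Fin R.r), R.wordProd m = t := by
  obtain ⟨l, i, rfl⟩ := ht
  refine ⟨l ++ [i] ++ l.reverse, ?_⟩
  rw [wordProd_append, wordProd_append, wordProd_reverse hR]
  simp [wordProd]

lemma IsRefl.mul_self {t : R.Aut} (ht : R.IsRefl t) : t * t = 1 := by
  obtain ⟨l, i, rfl⟩ := ht
  have h := S_mul_self hR i
  group
  rw [mul_assoc (R.wordProd l) (R.S i) (R.S i), h, mul_one]
  group

/-- Conjugating a reflection to a simple reflection. -/
lemma conj_refl_eq_S (q p : List (Fin R.r)) (i j : Fin R.r) {c : ℚ} (hc : c ≠ 0)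
    (hq : R.wordProd q (R.wordProd p (R.α i)) = c • R.α j) :
    R.wordProd q * (R.wordProd p * R.S i * (R.wordProd p)⁻¹) * (R.wordProd q)⁻¹
      = R.S j := by
  set E : R.Aut := R.wordProd q * R.wordProd p with hE
  have hEword : E = R.wordProd (q ++ p) := (wordProd_append q p).symm
  have hEinvword : (E⁻¹ : R.Aut) = R.wordProd (q ++ p).reverse := by
    rw [hEword, wordProd_reverse hR]
  have hEα : E (R.α i) = c • R.α j := hq
  have hEinvα : (E⁻¹ : R.Aut) (R.α j) = c⁻¹ • R.α i := by
    have : (E⁻¹ : R.Aut) (E (R.α i)) = R.α i := by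
      show (E⁻¹ * E) (R.α i) = R.α i
      rw [inv_mul_cancel]; rfl
    rw [hEα, map_smul] at this
    have := congrArg (fun x => c⁻¹ • x) this
    simpa [smul_smul, inv_mul_cancel₀ hc] using this
  -- the conjugated reflection, pointwise
  have hLHS : ∀ x : R.V, (E * R.S i * E⁻¹) x
      = x - (c * R.coroot (R.α i) ((E⁻¹ : R.Aut) x)) • R.α j := by
    intro x
    show E (R.S i ((E⁻¹ : R.Aut) x)) = _
    rw [S_apply hR, map_sub, map_smul, hEα]
    show (E * E⁻¹) x - _ = _
    rw [mul_inv_cancel, smul_smul]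
    simp [mul_comm]
  set f : Module.Dual ℚ R.V :=
    c • ((R.coroot (R.α i)).comp ((E⁻¹ : R.Aut) : R.V →ₗ[ℚ] R.V)) with hf
  have hfapp : ∀ x, f x = c * R.coroot (R.α i) ((E⁻¹ : R.Aut) x) := fun x => rfl
  have hfβ : f (R.α j) = 2 := by
    rw [hfapp, hEinvα, map_smul, smul_eq_mul, hR.coroot_self _ (hR.simple_mem i)]
    field_simp
  have hfΦ : ∀ γ ∈ R.Φ, γ - f γ • R.α j ∈ R.Φ := by
    intro γ hγ
    have h1 := wordProd_mem_Phi hR (q ++ p).reverse hγ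
    rw [← hEinvword] at h1
    have h2 : R.S i ((E⁻¹ : R.Aut) γ) ∈ R.Φ := by
      rw [S_apply hR]; exact hR.reflection_stable _ (hR.simple_mem i) _ h1
    have h3 := wordProd_mem_Phi hR (q ++ p) h2
    rw [← hEword] at h3
    have : (E * R.S i * E⁻¹) γ ∈ R.Φ := h3
    rwa [hLHS, ← hfapp] at this
  have hgΦ : ∀ γ ∈ R.Φ, γ - R.coroot (R.α j) γ • R.α j ∈ R.Φ :=
    fun γ hγ => hR.reflection_stable _ (hR.simple_mem j) _ hγ
  have hfg : f = R.coroot (R.α j) :=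
    refl_unique hR (hR.ne_zero _ (hR.simple_mem j)) f (R.coroot (R.α j)) hfβ
      (hR.coroot_self _ (hR.simple_mem j)) hfΦ hgΦ
  have : E * R.S i * E⁻¹ = R.S j := by
    apply LinearEquiv.toLinearMap_injective
    apply LinearMap.ext
    intro x
    rw [show ((E * R.S i * E⁻¹ : R.Aut) : R.V →ₗ[ℚ] R.V) x = (E * R.S i * E⁻¹ : R.Aut) x from rfl]
    rw [hLHS, ← hfapp, hfg]
    rw [show ((R.S j : R.Aut) : R.V →ₗ[ℚ] R.V) x = R.S j x from rfl, S_apply hR]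
  rw [← this, hE]
  group

end RootData
namespace RootData

variable {R : RootData} (hR : R.IsRootSystem)

/-! ### Strong exchange -/

include hR

omit hR in
lemma find_flip {β : R.V} (hβ : β ∈ R.pos) :
    ∀ ω : List (Fin R.r), R.wordProd ω β ∉ R.pos →
      ∃ j, ∃ _ : j < ω.length,
        R.wordProd (ω.drop (j+1)) β ∈ R.pos ∧ R.wordProd (ω.drop j) β ∉ R.pos := by
  intro ω
  induction ω with
  | nil => intro h; exact absurd hβ (by simpa using h)
  | cons a ω' ih =>
      intro h
      by_cases h' : R.wordProd ω' β ∈ R.pos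
      · exact ⟨0, by simp, by simpa using h', by simpa using h⟩
      · obtain ⟨j, hj, h1, h2⟩ := ih h'
        exact ⟨j + 1, by simpa using Nat.succ_lt_succ hj, by simpa using h1, by simpa using h2⟩

lemma strong_exchange (ω p : List (Fin R.r)) (i : Fin R.r)
    (hβ : R.wordProd p (R.α i) ∈ R.pos)
    (hneg : R.wordProd ω (R.wordProd p (R.α i)) ∉ R.pos) :
    ∃ j, ∃ _ : j < ω.length,
      R.wordProd ω * (R.wordProd p * R.S i * (R.wordProd p)⁻¹)
        = R.wordProd (ω.eraseIdx j) := by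
  obtain ⟨j, hj, h1, h2⟩ := find_flip (R := R) hβ ω hneg
  set β := R.wordProd p (R.α i) with hβdef
  set k := ω[j] with hk
  set γ := R.wordProd (ω.drop (j+1)) β with hγ
  have hdrop : ω.drop j = k :: ω.drop (j+1) := List.drop_eq_getElem_cons hj
  have h2' : R.S k γ ∉ R.pos := by
    have : R.wordProd (ω.drop j) β = R.S k γ := by
      rw [hdrop, wordProd_cons]; rfl
    rwa [this] at h2
  obtain ⟨c, hc, hγeq⟩ := eq_smul_simple hR k h1 h2'
  have hconj := conj_refl_eq_S hR (ω.drop (j+1)) p i k (ne_of_gt hc) (by rw [← hγ, hγeq])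
  set t : R.Aut := R.wordProd p * R.S i * (R.wordProd p)⁻¹ with hT
  have hqt : R.wordProd (ω.drop (j+1)) * t = R.S k * R.wordProd (ω.drop (j+1)) := by
    rw [← hconj]; group
  refine ⟨j, hj, ?_⟩
  have hsplit : R.wordProd ω = R.wordProd (ω.take j) * (R.S k * R.wordProd (ω.drop (j+1))) := by
    conv_lhs => rw [← List.take_append_drop j ω]
    rw [wordProd_append, hdrop, wordProd_cons]
  rw [hsplit, List.eraseIdx_eq_take_drop_succ, wordProd_append]
  rw [mul_assoc, mul_assoc, hqt, ← mul_assoc (R.S k), S_mul_self hR, one_mul]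

/-- A reflection decreases length when it sends the corresponding positive root
to a negative root. -/
lemma len_mul_refl_lt (l p : List (Fin R.r)) (i : Fin R.r)
    (hβ : R.wordProd p (R.α i) ∈ R.pos)
    (hneg : R.wordProd l (R.wordProd p (R.α i)) ∉ R.pos) :
    R.len (R.wordProd l * (R.wordProd p * R.S i * (R.wordProd p)⁻¹))
      < R.len (R.wordProd l) := by
  obtain ⟨m, hmred, hm2, hm3⟩ := exists_reduced_word (R := R) l
  have hneg' : R.wordProd m (R.wordProd p (R.α i)) ∉ R.pos := by rwa [hm2]
  obtain ⟨j, hj, heq⟩ := strong_exchange hR m p i hβ hneg'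
  rw [← hm2, heq]
  calc R.len (R.wordProd (m.eraseIdx j)) ≤ (m.eraseIdx j).length := len_le _
    _ = m.length - 1 := List.length_eraseIdx_of_lt hj
    _ < m.length := by omega
    _ = R.len (R.wordProd m) := hmred.symm

lemma refl_apply_posroot (p : List (Fin R.r)) (i : Fin R.r) :
    (R.wordProd p * R.S i * (R.wordProd p)⁻¹) (R.wordProd p (R.α i))
      = -(R.wordProd p (R.α i)) := by
  have h1 : ((R.wordProd p)⁻¹ : R.Aut) (R.wordProd p (R.α i)) = R.α i := by
    show ((R.wordProd p)⁻¹ * R.wordProd p) (R.α i) = R.α i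
    rw [inv_mul_cancel]; rfl
  show R.wordProd p (R.S i (((R.wordProd p)⁻¹ : R.Aut) (R.wordProd p (R.α i)))) = _
  rw [h1, S_apply_self hR, map_neg]

lemma len_lt_len_mul_refl (l p : List (Fin R.r)) (i : Fin R.r)
    (hβ : R.wordProd p (R.α i) ∈ R.pos)
    (hpos : R.wordProd l (R.wordProd p (R.α i)) ∈ R.pos) :
    R.len (R.wordProd l) < R.len (R.wordProd l * (R.wordProd p * R.S i * (R.wordProd p)⁻¹)) := by
  set t : R.Aut := R.wordProd p * R.S i * (R.wordProd p)⁻¹ with hT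
  have htt : t * t = 1 := IsRefl.mul_self hR ⟨p, i, rfl⟩
  have hword : R.wordProd (l ++ (p ++ [i] ++ p.reverse)) = R.wordProd l * t := by
    rw [wordProd_append, wordProd_append, wordProd_append, wordProd_reverse hR, hT]
    simp [wordProd]
  have hxβ : (R.wordProd l * t) (R.wordProd p (R.α i)) ∉ R.pos := by
    show R.wordProd l (t (R.wordProd p (R.α i))) ∉ R.pos
    rw [refl_apply_posroot hR, map_neg]
    exact neg_notMem_pos hR hpos
  have := len_mul_refl_lt hR (l ++ (p ++ [i] ++ p.reverse)) p i hβ (by rwa [hword])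
  rw [hword, mul_assoc, htt, mul_one] at this
  exact this

/-! ### Length dichotomy for simple reflections -/

omit hR in
lemma simple_as_refl (i : Fin R.r) :
    R.wordProd [] * R.S i * (R.wordProd [])⁻¹ = R.S i := by
  simp

lemma len_mul_S_of_pos (l : List (Fin R.r)) (i : Fin R.r)
    (h : R.wordProd l (R.α i) ∈ R.pos) :
    R.len (R.wordProd l * R.S i) = R.len (R.wordProd l) + 1 := by
  have hlt := len_lt_len_mul_refl hR l [] i (by simpa using hR.simple_pos i) (by simpa using h)
  rw [simple_as_refl] at hlt
  have hle := len_mul_S_le (R := R) l i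
  omega

lemma len_mul_S_of_neg (l : List (Fin R.r)) (i : Fin R.r)
    (h : R.wordProd l (R.α i) ∉ R.pos) :
    R.len (R.wordProd l * R.S i) + 1 = R.len (R.wordProd l) := by
  have hlt := len_mul_refl_lt hR l [] i (by simpa using hR.simple_pos i) (by simpa using h)
  rw [simple_as_refl] at hlt
  have hle := len_le_len_mul_S hR l i
  omega

/-! ### Deletion -/

lemma reduced_of_all_pos :
    ∀ μ : List (Fin R.r),
      (∀ k (h : k < μ.length), R.wordProd (μ.take k) (R.α μ[k]) ∈ R.pos) →
      R.len (R.wordProd μ) = μ.length := by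
  intro μ
  induction μ using List.reverseRecOn with
  | nil => simp
  | append_singleton μ₀ a ih =>
      intro H
      have h₀ : R.len (R.wordProd μ₀) = μ₀.length := by
        apply ih
        intro k hk
        have := H k (by simp; omega)
        rwa [List.take_append_of_le_length (le_of_lt hk),
          List.getElem_append_left hk] at this
      have hlast := H μ₀.length (by simp)
      rw [List.take_left, List.getElem_concat_length rfl] at hlast
      have hprod : R.wordProd (μ₀ ++ [a]) = R.wordProd μ₀ * R.S a := by
        rw [wordProd_append]; simp [wordProd]
      rw [hprod, len_mul_S_of_pos hR μ₀ a hlast, h₀]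
      simp

lemma exists_reduced_sublist (μ : List (Fin R.r)) :
    ∃ ν, ν.Sublist μ ∧ R.Reduced ν ∧ R.wordProd ν = R.wordProd μ := by
  suffices H : ∀ n (μ : List (Fin R.r)), μ.length = n →
      ∃ ν, ν.Sublist μ ∧ R.Reduced ν ∧ R.wordProd ν = R.wordProd μ from H μ.length μ rfl
  intro n
  induction n using Nat.strong_induction_on with
  | _ n ih =>
  intro μ hn
  subst hn
  by_cases hred : R.Reduced μ
  · exact ⟨μ, List.Sublist.refl μ, hred, rfl⟩
  · have hk : ∃ k, ∃ _ : k < μ.length, R.wordProd (μ.take k) (R.α μ[k]) ∉ R.pos := by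
      by_contra hc
      push_neg at hc
      exact hred (reduced_of_all_pos hR μ hc)
    obtain ⟨k, hk, hneg⟩ := hk
    obtain ⟨j, hj, heq⟩ := strong_exchange hR (μ.take k) [] μ[k]
      (by simpa using hR.simple_pos μ[k]) (by simpa using hneg)
    rw [simple_as_refl] at heq
    have hjk : j < k := by
      have : (μ.take k).length = k := by rw [List.length_take]; omega
      omega
    set μ' := (μ.take k).eraseIdx j ++ μ.drop (k+1) with hμ'
    have hdropk : μ.drop k = μ[k] :: μ.drop (k+1) := List.drop_eq_getElem_cons hk
    have hprod : R.wordProd μ' = R.wordProd μ := by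
      conv_rhs => rw [← List.take_append_drop k μ]
      rw [hμ', wordProd_append, wordProd_append, hdropk, wordProd_cons, ← heq]
      group
    have hsub : μ'.Sublist μ := by
      conv_rhs => rw [← List.take_append_drop k μ]
      apply List.Sublist.append
      · exact List.eraseIdx_sublist _ j
      · rw [hdropk]; exact List.sublist_cons_self _ _
    have hlen : μ'.length < μ.length := by
      rw [hμ', List.length_append, List.length_eraseIdx_of_lt (by rw [List.length_take]; omega),
        List.length_drop, List.length_take]
      omega
    obtain ⟨ν, hν1, hν2, hν3⟩ := ih μ'.length hlen μ' rfl
    exact ⟨ν, hν1.trans hsub, hν2, hν3.trans hprod⟩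

end RootData
namespace RootData

variable {R : RootData} (hR : R.IsRootSystem)

/-! ### More length lemmas, chains -/

/-- Being a product of a word in the simple reflections. -/
def IsWord (R : RootData) (x : R.Aut) : Prop := ∃ l, R.wordProd l = x

include hR

lemma IsWord.inv {x : R.Aut} (hx : R.IsWord x) : R.IsWord x⁻¹ := by
  obtain ⟨l, rfl⟩ := hx
  exact ⟨l.reverse, wordProd_reverse hR l⟩

omit hR

lemma IsWord.mul {x y : R.Aut} (hx : R.IsWord x) (hy : R.IsWord y) : R.IsWord (x * y) := by
  obtain ⟨l, rfl⟩ := hx; obtain ⟨m, rfl⟩ := hy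
  exact ⟨l ++ m, wordProd_append l m⟩

lemma exists_reduced_word' {x : R.Aut} (hx : R.IsWord x) :
    ∃ m, R.Reduced m ∧ R.wordProd m = x ∧ m.length = R.len x := by
  obtain ⟨l, rfl⟩ := hx
  exact exists_reduced_word l

include hR

lemma len_inv' {x : R.Aut} (hx : R.IsWord x) : R.len x⁻¹ = R.len x := by
  obtain ⟨l, rfl⟩ := hx
  exact len_inv hR l

lemma len_S_mul_cases {x : R.Aut} (hx : R.IsWord x) (i : Fin R.r) :
    (((x⁻¹ : R.Aut) (R.α i) ∈ R.pos) ∧ R.len (R.S i * x) = R.len x + 1) ∨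
    (((x⁻¹ : R.Aut) (R.α i) ∉ R.pos) ∧ R.len (R.S i * x) + 1 = R.len x) := by
  obtain ⟨l, rfl⟩ := hx
  have hlinv : R.len (R.S i * R.wordProd l) = R.len (R.wordProd l.reverse * R.S i) := by
    have h1 : R.wordProd l.reverse * R.S i = (R.S i * R.wordProd l)⁻¹ := by
      rw [wordProd_reverse hR, mul_inv_rev]
      rw [show (R.S i)⁻¹ = R.S i from S_inv hR i]
    rw [h1]
    have : R.IsWord (R.S i * R.wordProd l) := ⟨i :: l, (wordProd_cons i l).symm⟩
    exact (len_inv' hR this).symm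
  have hword : ((R.wordProd l)⁻¹ : R.Aut) (R.α i) = R.wordProd l.reverse (R.α i) := by
    rw [wordProd_reverse hR]
  by_cases h : ((R.wordProd l)⁻¹ : R.Aut) (R.α i) ∈ R.pos
  · left
    refine ⟨h, ?_⟩
    rw [hlinv, len_mul_S_of_pos hR l.reverse i (by rwa [← hword]), ← len_inv hR l,
      ← wordProd_reverse hR]
  · right
    refine ⟨h, ?_⟩
    rw [hlinv, len_mul_S_of_neg hR l.reverse i (by rwa [← hword]), ← len_inv hR l,
      ← wordProd_reverse hR]

lemma ascent_exact {x : R.Aut} (hx : R.IsWord x) {i : Fin R.r}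
    (h : R.len x < R.len (R.S i * x)) : R.len (R.S i * x) = R.len x + 1 := by
  rcases len_S_mul_cases hR hx i with ⟨_, h'⟩ | ⟨_, h'⟩ <;> omega

lemma descent_exact {x : R.Aut} (hx : R.IsWord x) {i : Fin R.r}
    (h : ¬ R.len x < R.len (R.S i * x)) : R.len (R.S i * x) + 1 = R.len x := by
  rcases len_S_mul_cases hR hx i with ⟨_, h'⟩ | ⟨_, h'⟩ <;> omega

lemma reduced_cons {i : Fin R.r} {ω₀ : List (Fin R.r)} (h : R.Reduced (i :: ω₀)) :
    R.Reduced ω₀ ∧ R.len (R.wordProd ω₀) + 1 = R.len (R.wordProd (i :: ω₀)) := by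
  have h1 : R.len (R.wordProd (i :: ω₀)) = ω₀.length + 1 := by
    rw [h]; simp
  have h2 : R.len (R.wordProd ω₀) ≤ ω₀.length := len_le ω₀
  have h3 := len_S_mul_cases hR ⟨ω₀, rfl⟩ i
  rw [← wordProd_cons, h1] at h3
  have h4 : R.len (R.wordProd ω₀) = ω₀.length := by omega
  exact ⟨h4, by rw [h4, h1]⟩

/-- A reflection with its positive root. -/
lemma IsRefl.posroot {t : R.Aut} (ht : R.IsRefl t) :
    ∃ (p : List (Fin R.r)) (i : Fin R.r),
      t = R.wordProd p * R.S i * (R.wordProd p)⁻¹ ∧ R.wordProd p (R.α i) ∈ R.pos := by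
  obtain ⟨p, i, rfl⟩ := ht
  by_cases h : R.wordProd p (R.α i) ∈ R.pos
  · exact ⟨p, i, rfl, h⟩
  · refine ⟨p ++ [i], i, ?_, ?_⟩
    · have happ : R.wordProd (p ++ [i]) = R.wordProd p * R.S i := by
        rw [wordProd_append]; simp [wordProd]
      rw [happ, mul_inv_rev, show (R.S i)⁻¹ = R.S i from S_inv hR i]
      have h := S_mul_self hR i
      group
      rw [mul_assoc (R.wordProd p * R.S i) (R.S i) (R.S i), h, mul_one]
    · have happ : R.wordProd (p ++ [i]) = R.wordProd p * R.S i := by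
        rw [wordProd_append]; simp [wordProd]
      rw [happ]
      show R.wordProd p (R.S i (R.α i)) ∈ R.pos
      rw [S_apply_self hR, map_neg]
      exact neg_mem_pos hR (wordProd_mem_Phi hR p (hR.simple_mem i))
        (fun hc => h hc)
  
/-- The chain ("Bruhat graph") order. -/
inductive Ch (R : RootData) : R.Aut → R.Aut → Prop
  | refl (x : R.Aut) : Ch R x x
  | step {x y : R.Aut} (t : R.Aut) : Ch R x y → R.IsRefl t →
      R.len y < R.len (y * t) → Ch R x (y * t)

lemma Ch.step_left {x y : R.Aut} (i : Fin R.r) (hc : Ch R x y) (hy : R.IsWord y)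
    (hlen : R.len y < R.len (R.S i * y)) : Ch R x (R.S i * y) := by
  obtain ⟨l, rfl⟩ := hy
  have hkey : R.S i * R.wordProd l
      = R.wordProd l * (R.wordProd l.reverse * R.S i * (R.wordProd l.reverse)⁻¹) := by
    rw [wordProd_reverse hR]
    group
  have ht : R.IsRefl (R.wordProd l.reverse * R.S i * (R.wordProd l.reverse)⁻¹) :=
    ⟨l.reverse, i, rfl⟩
  rw [hkey]
  exact Ch.step _ hc ht (by rw [← hkey]; exact hlen)

lemma Ch.isWord {x y : R.Aut} (hc : Ch R x y) (hx : R.IsWord x) : R.IsWord y := by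
  induction hc with
  | refl => exact hx
  | step t _ htr _ ih =>
      obtain ⟨m, hm⟩ := IsRefl.isWord hR htr
      exact ih.mul ⟨m, hm⟩

end RootData
namespace RootData

variable {R : RootData} (hR : R.IsRootSystem)

/-- Lifting property (Deodhar's property Z). -/
def Zp (R : RootData) (x : R.Aut) : Prop :=
  ∀ i : Fin R.r, R.len x < R.len (R.S i * x) →
    ∀ a, Ch R a x → Ch R (R.S i * a) (R.S i * x)

/-- Subword property: chains below `x` are exactly subword products of any
reduced word for `x`. -/
def P2p (R : RootData) (x : R.Aut) : Prop :=
  ∀ ω, R.Reduced ω → R.wordProd ω = x →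
    ∀ a, (Ch R a x ↔ ∃ μ, μ.Sublist ω ∧ R.wordProd μ = a)

include hR

lemma package : ∀ n (x : R.Aut), R.IsWord x → R.len x = n → Zp R x ∧ P2p R x := by
  intro n
  induction n using Nat.strong_induction_on with
  | _ n ih =>
  intro x hx hlen
  have hP2 : P2p R x := by
    intro ω hωred hωx a
    constructor
    · -- chain ⟹ subword
      intro hch
      cases hch with
      | refl => exact ⟨ω, List.Sublist.refl ω, hωx⟩
      | step t hch' htr hlt =>
          rename_i y
          obtain ⟨p, ip, htEq, hβpos⟩ := IsRefl.posroot hR htr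
          have htt : t * t = 1 := IsRefl.mul_self hR htr
          have hxt : R.wordProd ω * t = y := by
            rw [hωx, mul_assoc, htt, mul_one]
          have hny : R.len y < n := by rw [← hlen]; exact hlt
          have hneg : R.wordProd ω (R.wordProd p (R.α ip)) ∉ R.pos := by
            intro hcon
            have hgt := len_lt_len_mul_refl hR ω p ip hβpos hcon
            rw [← htEq, hxt, hωx] at hgt
            omega
          obtain ⟨j, hj, hex⟩ := strong_exchange hR ω p ip hβpos hneg
          rw [← htEq, hxt] at hex
          obtain ⟨ν, hν1, hν2, hν3⟩ := exists_reduced_sublist hR (ω.eraseIdx j)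
          have hνy : R.wordProd ν = y := hν3.trans hex.symm
          have hP2y := (ih (R.len y) hny y ⟨ν, hνy⟩ rfl).2
          obtain ⟨μ, hμ1, hμ2⟩ := (hP2y ν hν2 hνy a).mp hch'
          exact ⟨μ, hμ1.trans (hν1.trans (List.eraseIdx_sublist ω j)), hμ2⟩
    · -- subword ⟹ chain
      rintro ⟨μ, hμsub, rfl⟩
      cases ω with
      | nil =>
          obtain rfl := List.sublist_nil.mp hμsub
          rw [← hωx]
          exact Ch.refl _
      | cons i ω₀ =>
          obtain ⟨hred₀, hlen₀⟩ := reduced_cons hR hωred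
          have hSx : R.S i * R.wordProd ω₀ = x := by rw [← wordProd_cons, hωx]
          have hasc : R.len (R.wordProd ω₀) < R.len (R.S i * R.wordProd ω₀) := by
            rw [hSx, ← hωx]; omega
          have hyn : R.len (R.wordProd ω₀) < n := by
            rw [← hlen, ← hωx]
            rw [hSx, ← hωx] at hasc
            omega
          have ihy := ih (R.len (R.wordProd ω₀)) hyn (R.wordProd ω₀) ⟨ω₀, rfl⟩ rfl
          cases hμsub with
          | cons _ h =>
              have hch := (ihy.2 ω₀ hred₀ rfl (R.wordProd μ)).mpr ⟨μ, h, rfl⟩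
              have hc := Ch.step_left hR i hch ⟨ω₀, rfl⟩ hasc
              rwa [hSx] at hc
          | cons_cons _ h =>
              rename_i μ'
              have hch := (ihy.2 ω₀ hred₀ rfl (R.wordProd μ')).mpr ⟨μ', h, rfl⟩
              have hc := ihy.1 i hasc _ hch
              rw [hSx, ← wordProd_cons] at hc
              exact hc
  have hZ : Zp R x := by
    intro i hasc a hch
    cases hch with
    | refl => exact Ch.refl _
    | step t hch' htr hlt =>
        rename_i y
        have htt : t * t = 1 := IsRefl.mul_self hR htr
        obtain ⟨mt, hmt⟩ := IsRefl.isWord hR htr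
        have hyword : R.IsWord y := by
          have hyxt : y = (y * t) * t := by rw [mul_assoc, htt, mul_one]
          rw [hyxt]
          exact hx.mul ⟨mt, hmt⟩
        have hny : R.len y < n := by rw [← hlen]; exact hlt
        by_cases hyasc : R.len y < R.len (R.S i * y)
        · have hZy := (ih _ hny y hyword rfl).1 i hyasc a hch'
          have hstep : R.S i * (y * t) = (R.S i * y) * t := by rw [mul_assoc]
          rw [hstep]
          refine Ch.step t hZy htr ?_
          rw [← hstep]
          have h1 := ascent_exact hR hyword hyasc
          have h2 := ascent_exact hR hx hasc
          omega
        · have hdesc := descent_exact hR hyword hyasc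
          obtain ⟨ly, hly⟩ := hyword
          have hcword : R.IsWord (R.S i * y) := ⟨i :: ly, by rw [wordProd_cons, hly]⟩
          have hcn : R.len (R.S i * y) < R.len y := by omega
          obtain ⟨ω₀, hω₀red, hω₀c, hω₀len⟩ := exists_reduced_word' hcword
          have hyw : R.wordProd (i :: ω₀) = y := by
            rw [wordProd_cons, hω₀c, ← mul_assoc, S_mul_self hR, one_mul]
          have hredcons : R.Reduced (i :: ω₀) := by
            show R.len (R.wordProd (i :: ω₀)) = (i :: ω₀).length
            rw [hyw]
            simp only [List.length_cons]
            omega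
          obtain ⟨μ, hμsub, hμa⟩ :=
            ((ih _ hny y ⟨ly, hly⟩ rfl).2 (i :: ω₀) hredcons hyw a).mp hch'
          have ihc := ih (R.len (R.S i * y)) (by omega) (R.S i * y) hcword rfl
          have hScy : R.S i * (R.S i * y) = y := by
            rw [← mul_assoc, S_mul_self hR, one_mul]
          have hcasc : R.len (R.S i * y) < R.len (R.S i * (R.S i * y)) := by
            rw [hScy]; omega
          have extend : ∀ b, Ch R b y → Ch R b (R.S i * (y * t)) := by
            intro b hb
            exact Ch.step_left hR i (Ch.step t hb htr hlt) hx hasc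
          cases hμsub with
          | cons _ h =>
              have hchc := (ihc.2 ω₀ hω₀red hω₀c (R.wordProd μ)).mpr ⟨μ, h, rfl⟩
              have hzc := ihc.1 i hcasc _ hchc
              rw [hScy] at hzc
              rw [← hμa]
              exact extend _ hzc
          | cons_cons _ h =>
              rename_i μ'
              have hchc := (ihc.2 ω₀ hω₀red hω₀c (R.wordProd μ')).mpr ⟨μ', h, rfl⟩
              have hchy : Ch R (R.wordProd μ') y := by
                have := Ch.step_left hR i hchc hcword hcasc
                rwa [hScy] at this
              have hSia : R.S i * a = R.wordProd μ' := by
                rw [← hμa, wordProd_cons, ← mul_assoc, S_mul_self hR, one_mul]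
              rw [hSia]
              exact extend _ hchy
  exact ⟨hZ, hP2⟩

end RootData
namespace RootData

variable {R : RootData} (hR : R.IsRootSystem)

/-! ### Bruhat order properties -/

include hR

/-- Word independence of the Bruhat order (subword property). -/
lemma bruhat_subword {x y : R.Aut} (hxy : R.BruhatLE x y)
    {ω : List (Fin R.r)} (hωred : R.Reduced ω) (hωy : R.wordProd ω = y) :
    ∃ μ, μ.Sublist ω ∧ R.wordProd μ = x := by
  obtain ⟨l, hlred, hly, l', hsub, hl'⟩ := hxy
  have hpack := (package hR (R.len y) y ⟨l, hly⟩ rfl).2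
  have hch : Ch R x y := (hpack l hlred hly x).mpr ⟨l', hsub, hl'⟩
  exact (hpack ω hωred hωy x).mp hch

omit hR in
lemma bruhat_refl {x : R.Aut} (hx : R.IsWord x) : R.BruhatLE x x := by
  obtain ⟨m, hred, hm, _⟩ := exists_reduced_word' (R := R) hx
  exact ⟨m, hred, hm, m, List.Sublist.refl m, hm⟩

lemma bruhat_trans {x y z : R.Aut} (h1 : R.BruhatLE x y) (h2 : R.BruhatLE y z) :
    R.BruhatLE x z := by
  obtain ⟨l, hlred, hlz, l', hsub, hl'⟩ := h2
  obtain ⟨ν, hν1, hν2, hν3⟩ := exists_reduced_sublist hR l'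
  obtain ⟨μ, hμ1, hμ2⟩ := bruhat_subword hR h1 hν2 (hν3.trans hl')
  exact ⟨l, hlred, hlz, μ, hμ1.trans (hν1.trans hsub), hμ2⟩

lemma bruhat_inv {x y : R.Aut} (h : R.BruhatLE x y) : R.BruhatLE x⁻¹ y⁻¹ := by
  obtain ⟨l, hlred, hly, l', hsub, hl'⟩ := h
  refine ⟨l.reverse, ?_, by rw [wordProd_reverse hR, hly], l'.reverse, hsub.reverse,
    by rw [wordProd_reverse hR, hl']⟩
  show R.len (R.wordProd l.reverse) = l.reverse.length
  rw [wordProd_reverse hR, len_inv' hR ⟨l, rfl⟩, List.length_reverse]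
  exact hlred

/-- Lifting: if `y ≤ X` and `s_i X > X` then `y ≤ s_i X`. -/
lemma bruhat_le_ascent {y X : R.Aut} (h : R.BruhatLE y X)
    {i : Fin R.r} (hasc : R.len X < R.len (R.S i * X)) : R.BruhatLE y (R.S i * X) := by
  obtain ⟨ω, hωred, hωX, μ, hsub, hμ⟩ := h
  have hacc := ascent_exact hR ⟨ω, hωX⟩ hasc
  refine ⟨i :: ω, ?_, by rw [wordProd_cons, hωX], μ, hsub.cons i, hμ⟩
  show R.len (R.wordProd (i :: ω)) = (i :: ω).length
  rw [wordProd_cons, hωX, hacc, List.length_cons, ← hωX]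
  exact congrArg (· + 1) hωred

/-- Lifting: if `y ≤ X` and `s_i X > X` then `s_i y ≤ s_i X`. -/
lemma bruhat_le_ascent' {y X : R.Aut} (h : R.BruhatLE y X)
    {i : Fin R.r} (hasc : R.len X < R.len (R.S i * X)) :
    R.BruhatLE (R.S i * y) (R.S i * X) := by
  obtain ⟨ω, hωred, hωX, μ, hsub, hμ⟩ := h
  have hacc := ascent_exact hR ⟨ω, hωX⟩ hasc
  refine ⟨i :: ω, ?_, by rw [wordProd_cons, hωX], i :: μ, hsub.cons₂ i,
    by rw [wordProd_cons, hμ]⟩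
  show R.len (R.wordProd (i :: ω)) = (i :: ω).length
  rw [wordProd_cons, hωX, hacc, List.length_cons, ← hωX]
  exact congrArg (· + 1) hωred

/-- Lifting: if `y ≤ X` and `s_i X < X` then `s_i y ≤ X`. -/
lemma bruhat_le_descent {y X : R.Aut} (hX : R.IsWord X) (h : R.BruhatLE y X)
    {i : Fin R.r} (hdesc : ¬ R.len X < R.len (R.S i * X)) :
    R.BruhatLE (R.S i * y) X := by
  have hde := descent_exact hR hX hdesc
  obtain ⟨lX, hlX⟩ := hX
  have hcword : R.IsWord (R.S i * X) := ⟨i :: lX, by rw [wordProd_cons, hlX]⟩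
  obtain ⟨ω₀, hω₀red, hω₀c, hω₀len⟩ := exists_reduced_word' hcword
  have hXw : R.wordProd (i :: ω₀) = X := by
    rw [wordProd_cons, hω₀c, ← mul_assoc, S_mul_self hR, one_mul]
  have hredcons : R.Reduced (i :: ω₀) := by
    show R.len (R.wordProd (i :: ω₀)) = (i :: ω₀).length
    rw [hXw, List.length_cons]
    omega
  obtain ⟨μ, hμsub, hμy⟩ := bruhat_subword hR h hredcons hXw
  cases hμsub with
  | cons _ h' =>
      exact ⟨i :: ω₀, hredcons, hXw, i :: μ, h'.cons₂ i, by rw [wordProd_cons, hμy]⟩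
  | cons_cons _ h' =>
      rename_i μ'
      refine ⟨i :: ω₀, hredcons, hXw, μ', (h'.cons i), ?_⟩
      rw [← hμy, wordProd_cons, ← mul_assoc, S_mul_self hR, one_mul]

/-! ### Demazure product lemmas -/

omit hR

lemma dmulList_cons (i : Fin R.r) (l : List (Fin R.r)) (v : R.Aut) :
    R.dmulList (i :: l) v = R.dmulStep i (R.dmulList l v) := rfl

lemma dmulList_word {v : R.Aut} (hv : R.IsWord v) (l : List (Fin R.r)) :
    R.IsWord (R.dmulList l v) := by
  induction l with
  | nil => exact hv
  | cons i l ih =>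
      rw [dmulList_cons, dmulStep]
      split
      · obtain ⟨m, hm⟩ := ih
        exact ⟨i :: m, by rw [wordProd_cons, hm]⟩
      · exact ih

/-- The Demazure product of a word against `v` is `π μ * v` for a subword `μ`. -/
lemma dmulList_eq_subword (l : List (Fin R.r)) (v : R.Aut) :
    ∃ μ, μ.Sublist l ∧ R.dmulList l v = R.wordProd μ * v := by
  induction l with
  | nil => exact ⟨[], List.Sublist.refl _, by simp [dmulList]⟩
  | cons i l ih =>
      obtain ⟨μ, hsub, heq⟩ := ih
      rw [dmulList_cons, dmulStep]
      split
      · exact ⟨i :: μ, hsub.cons₂ i, by rw [heq, wordProd_cons, mul_assoc]⟩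
      · exact ⟨μ, hsub.cons i, heq⟩

include hR

/-- Any subword product `π μ * v` is Bruhat-below the Demazure product. -/
lemma subword_le_dmulList {v : R.Aut} (hv : R.IsWord v) :
    ∀ (l μ : List (Fin R.r)), μ.Sublist l →
      R.BruhatLE (R.wordProd μ * v) (R.dmulList l v) := by
  intro l
  induction l with
  | nil =>
      intro μ hsub
      obtain rfl := List.sublist_nil.mp hsub
      have : R.wordProd [] * v = v := by simp
      rw [this]
      exact bruhat_refl hv
  | cons i l ih =>
      intro μ hsub
      have hXword := dmulList_word hv l
      rw [dmulList_cons, dmulStep]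
      cases hsub with
      | cons _ h' =>
          have hle := ih μ h'
          split
          · exact bruhat_le_ascent hR hle (by assumption)
          · exact hle
      | cons_cons _ h' =>
          rename_i μ'
          have hle := ih μ' h'
          have hrw : R.wordProd (i :: μ') * v = R.S i * (R.wordProd μ' * v) := by
            rw [wordProd_cons, mul_assoc]
          rw [hrw]
          split
          · exact bruhat_le_ascent' hR hle (by assumption)
          · exact bruhat_le_descent hR hXword hle (by assumption)

end RootData
theorem statement7 (R : RootData) (hR : R.IsRootSystem)
    (u v w : R.Aut) (hu : u ∈ R.weylGroup) (hv : v ∈ R.weylGroup)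
    (hw : w ∈ R.weylGroup) :
    (∀ q : R.Aut, R.BruhatLE q w → R.BruhatLE (q⁻¹ * v) u) ↔
      R.BruhatLE (R.dmul w⁻¹ v) u := by
  classical
  have hwword : R.IsWord w := RootData.exists_word hR hw
  have hvword : R.IsWord v := RootData.exists_word hR hv
  have hwinv : R.IsWord w⁻¹ := RootData.IsWord.inv hR hwword
  obtain ⟨lw, hlwred, hlww, _⟩ := RootData.exists_reduced_word' hwinv
  have hex : ∃ l, R.Reduced l ∧ R.wordProd l = w⁻¹ := ⟨lw, hlwred, hlww⟩
  have hdm : R.dmul w⁻¹ v = R.dmulList hex.choose v := by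
    rw [RootData.dmul, dif_pos hex]
  obtain ⟨hl₀red, hl₀w⟩ := hex.choose_spec
  constructor
  · intro h
    obtain ⟨μ, hμsub, hμeq⟩ := RootData.dmulList_eq_subword (R := R) hex.choose v
    have hq : R.BruhatLE (R.wordProd μ) w⁻¹ := ⟨hex.choose, hl₀red, hl₀w, μ, hμsub, rfl⟩
    have hq' : R.BruhatLE (R.wordProd μ)⁻¹ w := by
      have h2 := RootData.bruhat_inv hR hq
      rwa [inv_inv] at h2
    have h3 := h _ hq'
    rw [inv_inv] at h3
    rw [hdm, hμeq]
    exact h3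
  · intro h q hq
    have hq' := RootData.bruhat_inv hR hq
    obtain ⟨μ, hμsub, hμeq⟩ := RootData.bruhat_subword hR hq' hl₀red hl₀w
    have hle := RootData.subword_le_dmulList hR hvword hex.choose μ hμsub
    rw [hμeq] at hle
    rw [hdm] at h
    exact RootData.bruhat_trans hR hle h
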